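/- arXiv:1311.5939 — 5 statements merged into one kernel-verified Lean document; each statement's English description precedes it below -/
import Mathlib

section
/- The variance of a hypergeometric random variable with parameters N, M, n equals n·M·(N−M)·(N−n)/(N²·(N−1)). -/
open Finset

lemma vand (a b n : ℕ) :
    ∑ i ∈ range (n + 1), a.choose i * b.choose (n - i) = (a + b).choose n := by
  rw [Nat.add_choose_eq, Finset.Nat.sum_antidiagonal_eq_sum_range_succ_mk]

lemma step (m k : ℕ) : (k + 1) * (m + 1).choose (k + 1) = (m + 1) * m.choose k := by
  rw [Nat.add_one_mul_choose_eq, mul_comm]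

lemma sumA (N M n : ℕ) (hMN : M ≤ N) :
    N * ∑ i ∈ range (n + 1), i * (M.choose i * (N - M).choose (n - i))
      = n * M * N.choose n := by
  rcases n with _ | t
  · simp
  rcases M with _ | m
  · rw [Finset.sum_eq_zero, mul_zero, Nat.mul_zero, Nat.zero_mul]
    rintro (_ | i) _ <;> simp [Nat.choose]
  · rw [Finset.sum_range_succ']
    simp only [Nat.zero_mul, add_zero]
    have h1 : ∀ k ∈ range (t + 1),
        (k + 1) * ((m + 1).choose (k + 1) * (N - (m + 1)).choose (t + 1 - (k + 1)))
          = (m + 1) * (m.choose k * (N - (m + 1)).choose (t - k)) := by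
      intro k _
      have : t + 1 - (k + 1) = t - k := by omega
      rw [this, ← mul_assoc, step, mul_assoc]
    rw [Finset.sum_congr rfl h1, ← Finset.mul_sum, vand]
    have hm : m + (N - (m + 1)) = N - 1 := by omega
    rw [hm]
    have h2 : N * (N - 1).choose t = N.choose (t + 1) * (t + 1) := by
      have := Nat.add_one_mul_choose_eq (N - 1) t
      rwa [show N - 1 + 1 = N from by omega] at this
    calc N * ((m + 1) * (N - 1).choose t)
        = (m + 1) * (N * (N - 1).choose t) := by ring
      _ = (m + 1) * (N.choose (t + 1) * (t + 1)) := by rw [h2]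
      _ = (t + 1) * (m + 1) * N.choose (t + 1) := by ring

lemma sumB (N M n : ℕ) (hMN : M ≤ N) :
    N * (N - 1) * ∑ i ∈ range (n + 1), i * (i - 1) * (M.choose i * (N - M).choose (n - i))
      = n * (n - 1) * (M * (M - 1)) * N.choose n := by
  rcases n with _ | _ | t
  · simp
  · rw [Finset.sum_range_succ, Finset.sum_range_succ, Finset.sum_range_zero]
    simp
  rcases M with _ | _ | m
  · rw [Finset.sum_eq_zero, mul_zero]
    · simp
    rintro (_ | _ | i) _ <;> simp [Nat.choose]
  · rw [Finset.sum_eq_zero, mul_zero]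
    · simp
    rintro (_ | _ | i) _ <;> simp [Nat.choose]
  · have hM2 : 2 ≤ N := by omega
    rw [Finset.sum_range_succ', Finset.sum_range_succ']
    simp only [Nat.zero_mul, Nat.mul_zero, add_zero, Nat.sub_self]
    have h1 : ∀ k ∈ range (t + 1),
        (k + 1 + 1) * (k + 1 + 1 - 1) *
            ((m + 2).choose (k + 1 + 1) * (N - (m + 2)).choose (t + 2 - (k + 1 + 1)))
          = (m + 2) * (m + 1) * (m.choose k * (N - (m + 2)).choose (t - k)) := by
      intro k _
      have e1 : t + 2 - (k + 1 + 1) = t - k := by omega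
      have e2 : k + 1 + 1 - 1 = k + 1 := by omega
      rw [e1, e2]
      have s1 : (k + 1 + 1) * (m + 1 + 1).choose (k + 1 + 1) = (m + 2) * (m + 1).choose (k + 1) :=
        step (m + 1) (k + 1)
      have s2 : (k + 1) * (m + 1).choose (k + 1) = (m + 1) * m.choose k := step m k
      calc (k + 1 + 1) * (k + 1) * ((m + 2).choose (k + 1 + 1) * (N - (m + 2)).choose (t - k))
          = ((k + 1 + 1) * (m + 1 + 1).choose (k + 1 + 1)) * ((k + 1) * (N - (m + 2)).choose (t - k)) := by
            ring
        _ = ((m + 2) * (m + 1).choose (k + 1)) * ((k + 1) * (N - (m + 2)).choose (t - k)) := by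
            rw [s1]
        _ = (m + 2) * (((k + 1) * (m + 1).choose (k + 1)) * (N - (m + 2)).choose (t - k)) := by
            ring
        _ = (m + 2) * (((m + 1) * m.choose k) * (N - (m + 2)).choose (t - k)) := by rw [s2]
        _ = (m + 2) * (m + 1) * (m.choose k * (N - (m + 2)).choose (t - k)) := by ring
    rw [Finset.sum_congr rfl h1, ← Finset.mul_sum, vand]
    have hm : m + (N - (m + 2)) = N - 2 := by omega
    rw [hm]
    have h2 : (N - 1) * (N - 2).choose t = (N - 1).choose (t + 1) * (t + 1) := by
      have := Nat.add_one_mul_choose_eq (N - 2) t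
      rwa [show N - 2 + 1 = N - 1 from by omega] at this
    have h3 : N * (N - 1).choose (t + 1) = N.choose (t + 2) * (t + 2) := by
      have := Nat.add_one_mul_choose_eq (N - 1) (t + 1)
      rwa [show N - 1 + 1 = N from by omega] at this
    calc N * (N - 1) * ((m + 2) * (m + 1) * (N - 2).choose t)
        = N * ((m + 2) * (m + 1)) * ((N - 1) * (N - 2).choose t) := by ring
      _ = N * ((m + 2) * (m + 1)) * ((N - 1).choose (t + 1) * (t + 1)) := by rw [h2]
      _ = ((m + 2) * (m + 1)) * (t + 1) * (N * (N - 1).choose (t + 1)) := by ring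
      _ = ((m + 2) * (m + 1)) * (t + 1) * (N.choose (t + 2) * (t + 2)) := by rw [h3]
      _ = (t + 1 + 1) * (t + 1 + 1 - 1) * ((m + 1 + 1) * (m + 1 + 1 - 1)) * N.choose (t + 2) := by
          simp only [Nat.add_sub_cancel]
          ring

lemma sq_split (i : ℕ) : i * (i - 1) + i = i ^ 2 := by
  cases i with
  | zero => rfl
  | succ k => simp only [Nat.succ_sub_one]; ring

theorem hypergeom_variance (N M n : ℕ) (hMN : M ≤ N) (hnN : n ≤ N) (hN : 2 ≤ N) :
    (∑ i ∈ Finset.range (n + 1),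
        (i : ℚ) ^ 2 * ((M.choose i * (N - M).choose (n - i) : ℚ) / (N.choose n : ℚ)))
      - (∑ i ∈ Finset.range (n + 1),
        (i : ℚ) * ((M.choose i * (N - M).choose (n - i) : ℚ) / (N.choose n : ℚ))) ^ 2
      = (n : ℚ) * M * ((N : ℚ) - M) * ((N : ℚ) - n) / ((N : ℚ) ^ 2 * ((N : ℚ) - 1)) := by
  set A : ℕ := ∑ i ∈ range (n + 1), i * (M.choose i * (N - M).choose (n - i)) with hAdef
  set B : ℕ := ∑ i ∈ range (n + 1), i * (i - 1) * (M.choose i * (N - M).choose (n - i)) with hBdef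
  have hc : (0 : ℚ) < (N.choose n : ℚ) := by exact_mod_cast Nat.choose_pos hnN
  have hc0 : (N.choose n : ℚ) ≠ 0 := ne_of_gt hc
  have hN0 : (N : ℚ) ≠ 0 := by positivity
  have hN2 : (2 : ℚ) ≤ (N : ℚ) := by exact_mod_cast hN
  have hN1 : (N : ℚ) - 1 ≠ 0 := by linarith
  have hkk : ∀ k : ℕ, ((k * (k - 1) : ℕ) : ℚ) = (k : ℚ) * ((k : ℚ) - 1) := by
    intro k
    cases k with
    | zero => simp
    | succ j => push_cast [Nat.succ_sub_one]; ring
  have hA : (N : ℚ) * (A : ℚ) = (n : ℚ) * (M : ℚ) * (N.choose n : ℚ) := by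
    exact_mod_cast congrArg (Nat.cast : ℕ → ℚ) (sumA N M n hMN)
  have hB : (N : ℚ) * ((N : ℚ) - 1) * (B : ℚ)
      = (n : ℚ) * ((n : ℚ) - 1) * ((M : ℚ) * ((M : ℚ) - 1)) * (N.choose n : ℚ) := by
    have h := congrArg (Nat.cast : ℕ → ℚ) (sumB N M n hMN)
    rw [Nat.cast_mul, hkk, Nat.cast_mul, Nat.cast_mul, hkk, hkk] at h
    exact h
  have hBA : (B : ℚ) + (A : ℚ)
      = ∑ i ∈ range (n + 1), (i : ℚ) ^ 2 * ((M.choose i : ℚ) * ((N - M).choose (n - i) : ℚ)) := by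
    have hnat : B + A = ∑ i ∈ range (n + 1), i ^ 2 * (M.choose i * (N - M).choose (n - i)) := by
      rw [hAdef, hBdef, ← Finset.sum_add_distrib]
      refine Finset.sum_congr rfl fun i _ => ?_
      rw [← sq_split]
      ring
    have := congrArg (Nat.cast : ℕ → ℚ) hnat
    push_cast at this
    linarith [this]
  have e1 : ∑ i ∈ Finset.range (n + 1),
      (i : ℚ) * ((M.choose i * (N - M).choose (n - i) : ℚ) / (N.choose n : ℚ))
      = (A : ℚ) / (N.choose n : ℚ) := by
    rw [hAdef]
    push_cast
    rw [Finset.sum_div]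
    refine Finset.sum_congr rfl fun i _ => ?_
    ring
  have e2 : ∑ i ∈ Finset.range (n + 1),
      (i : ℚ) ^ 2 * ((M.choose i * (N - M).choose (n - i) : ℚ) / (N.choose n : ℚ))
      = ((B : ℚ) + (A : ℚ)) / (N.choose n : ℚ) := by
    rw [hBA, Finset.sum_div]
    refine Finset.sum_congr rfl fun i _ => ?_
    ring
  rw [e1, e2]
  have hA2 : (A : ℚ) = (n : ℚ) * (M : ℚ) * (N.choose n : ℚ) / (N : ℚ) := by
    rw [eq_div_iff hN0]
    linear_combination hA
  have hB2 : (B : ℚ) = (n : ℚ) * ((n : ℚ) - 1) * ((M : ℚ) * ((M : ℚ) - 1)) * (N.choose n : ℚ)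
      / ((N : ℚ) * ((N : ℚ) - 1)) := by
    rw [eq_div_iff (mul_ne_zero hN0 hN1)]
    linear_combination hB
  rw [hA2, hB2]
  field_simp
  ring
end

section
/- Hoeffding's bound for the hypergeometric upper tail: with p = M/N and k = (p+t)·n for t ≥ 0 with p + t < 1 and p > 0, the tail probability H(M,N,n,k) = ∑_{i≥k} h(M,N,n,i) is at most ((p/(p+t))^{p+t} · ((1−p)/(1−p−t))^{1−p−t})^n. -/
open Finset

lemma descFact_pow_le (M N : ℕ) (h : M ≤ N) (j : ℕ) :
    M.descFactorial j * N ^ j ≤ N.descFactorial j * M ^ j := by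
  induction j with
  | zero => simp
  | succ j ih =>
    rw [Nat.descFactorial_succ, Nat.descFactorial_succ, pow_succ, pow_succ]
    calc (M - j) * M.descFactorial j * (N ^ j * N)
        = ((M - j) * N) * (M.descFactorial j * N ^ j) := by ring
      _ ≤ ((N - j) * M) * (N.descFactorial j * M ^ j) := by
          apply Nat.mul_le_mul _ ih
          rcases Nat.le_total j M with hj | hj
          · calc (M - j) * N = M * N - j * N := by rw [Nat.sub_mul]
              _ ≤ N * M - j * M := by
                  rw [Nat.mul_comm M N]
                  exact Nat.sub_le_sub_left (Nat.mul_le_mul_left j h) _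
              _ = (N - j) * M := by rw [Nat.sub_mul]
          · simp [Nat.sub_eq_zero_of_le hj]
      _ = (N - j) * N.descFactorial j * (M ^ j * M) := by ring

lemma choose_pow_le (M N : ℕ) (h : M ≤ N) (j : ℕ) :
    M.choose j * N ^ j ≤ N.choose j * M ^ j := by
  have h2 := descFact_pow_le M N h j
  rw [Nat.descFactorial_eq_factorial_mul_choose, Nat.descFactorial_eq_factorial_mul_choose,
    Nat.mul_assoc, Nat.mul_assoc] at h2
  exact Nat.le_of_mul_le_mul_left h2 (Nat.factorial_pos j)

lemma choose_mul' (M i j : ℕ) (hj : j ≤ i) :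
    M.choose i * i.choose j = M.choose j * (M - j).choose (i - j) := by
  rcases Nat.le_total i M with hi | hi
  · exact Nat.choose_mul hj
  · rcases Nat.eq_or_lt_of_le hi with rfl | hi
    · exact Nat.choose_mul hj
    · rw [Nat.choose_eq_zero_of_lt hi, Nat.zero_mul]
      rcases Nat.lt_or_ge M j with h1 | h1
      · rw [Nat.choose_eq_zero_of_lt h1, Nat.zero_mul]
      · rw [Nat.choose_eq_zero_of_lt (show M - j < i - j by omega), Nat.mul_zero]

lemma chv_inner (M N n j : ℕ) (hMN : M ≤ N) (hj : j ≤ n) :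
    ∑ i ∈ range (n + 1), M.choose i * i.choose j * (N - M).choose (n - i)
      = M.choose j * (N - j).choose (n - j) := by
  have step : ∀ i ∈ range (n+1),
      M.choose i * i.choose j * (N - M).choose (n - i)
        = if j ≤ i then M.choose j * ((M - j).choose (i - j) * (N - M).choose (n - i)) else 0 := by
    intro i _
    by_cases hij : j ≤ i
    · rw [if_pos hij, choose_mul' M i j hij]; ring
    · rw [if_neg hij]
      simp [Nat.choose_eq_zero_of_lt (show i < j by omega)]
  rw [Finset.sum_congr rfl step, Finset.sum_ite, Finset.sum_const_zero, Nat.add_zero,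
    ← Finset.mul_sum]
  by_cases hjM : j ≤ M
  · congr 1
    have hfil : (range (n+1)).filter (fun i => j ≤ i) = Ico j (n+1) := by
      ext i; simp [Nat.lt_succ_iff]; omega
    rw [hfil, Finset.sum_Ico_eq_sum_range]
    have hcong : ∀ a ∈ range (n + 1 - j), (M - j).choose (j + a - j) * (N - M).choose (n - (j + a))
        = (M - j).choose a * (N - M).choose ((n - j) - a) := by
      intro a _; congr 2 <;> omega
    rw [Finset.sum_congr rfl hcong]
    have hnj : n + 1 - j = (n - j) + 1 := by omega
    have hNj : N - j = (M - j) + (N - M) := by omega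
    rw [hnj, hNj, Nat.add_choose_eq, Finset.Nat.sum_antidiagonal_eq_sum_range_succ_mk]
  · rw [Nat.choose_eq_zero_of_lt (by omega), Nat.zero_mul, Nat.zero_mul]
lemma chv_identity (M N n : ℕ) (hMN : M ≤ N) (x : ℝ) :
    ∑ i ∈ range (n + 1), (M.choose i * (N - M).choose (n - i) : ℝ) * (x + 1) ^ i
      = ∑ j ∈ range (n + 1), (M.choose j * (N - j).choose (n - j) : ℝ) * x ^ j := by
  have expand : ∀ i ∈ range (n + 1),
      (M.choose i * (N - M).choose (n - i) : ℝ) * (x + 1) ^ i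
        = ∑ j ∈ range (n + 1),
            ((M.choose i * i.choose j * (N - M).choose (n - i) : ℕ) : ℝ) * x ^ j := by
    intro i hi
    have hi' : i + 1 ≤ n + 1 := by simp [Finset.mem_range] at hi; omega
    have e1 : (x + 1) ^ i = ∑ j ∈ range (n + 1), (i.choose j : ℝ) * x ^ j := by
      rw [add_pow, Finset.sum_subset (Finset.range_subset_range.2 hi')
        (fun j _ hj => by
          rw [Nat.choose_eq_zero_of_lt (by simp [Finset.mem_range] at hj ⊢; omega)]
          simp)]
      exact Finset.sum_congr rfl fun j _ => by rw [one_pow]; ring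
    rw [e1, Finset.mul_sum]
    exact Finset.sum_congr rfl fun j _ => by push_cast; ring
  rw [Finset.sum_congr rfl expand, Finset.sum_comm]
  apply Finset.sum_congr rfl
  intro j hj
  rw [← Finset.sum_mul, ← Nat.cast_sum,
    chv_inner M N n j hMN (by simp [Finset.mem_range] at hj; omega)]
  push_cast; ring

lemma chv_bound (M N n : ℕ) (hMN : M ≤ N) (hN : 0 < N) (hnN : n ≤ N) (x : ℝ) (hx : 0 ≤ x) :
    ∑ i ∈ range (n + 1), (M.choose i * (N - M).choose (n - i) : ℝ) * (x + 1) ^ i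
      ≤ (N.choose n : ℝ) * (1 + ((M : ℝ) / N) * x) ^ n := by
  rw [chv_identity M N n hMN x]
  have hNpos : (0 : ℝ) < N := by exact_mod_cast hN
  have rhs : (1 + ((M : ℝ) / N) * x) ^ n
      = ∑ j ∈ range (n + 1), (n.choose j : ℝ) * (((M : ℝ) / N) * x) ^ j := by
    rw [add_comm, add_pow]
    exact Finset.sum_congr rfl fun j _ => by rw [one_pow]; ring
  rw [rhs, Finset.mul_sum]
  apply Finset.sum_le_sum
  intro j hj
  have hjn : j ≤ n := by simp [Finset.mem_range] at hj; omega
  have key : (M.choose j * (N - j).choose (n - j)) * N ^ j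
      ≤ (N.choose n * n.choose j) * M ^ j := by
    rw [Nat.choose_mul (n := N) hjn]
    calc M.choose j * (N - j).choose (n - j) * N ^ j
        = (M.choose j * N ^ j) * (N - j).choose (n - j) := by ring
      _ ≤ (N.choose j * M ^ j) * (N - j).choose (n - j) :=
          Nat.mul_le_mul_right _ (choose_pow_le M N hMN j)
      _ = N.choose j * (N - j).choose (n - j) * M ^ j := by ring
  have keyR : (M.choose j * (N - j).choose (n - j) : ℝ)
      ≤ (N.choose n : ℝ) * (n.choose j) * ((M : ℝ) / N) ^ j := by
    rw [div_pow, ← mul_div_assoc, le_div_iff₀ (by positivity)]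
    exact_mod_cast key
  calc (M.choose j * (N - j).choose (n - j) : ℝ) * x ^ j
      ≤ ((N.choose n : ℝ) * (n.choose j) * ((M : ℝ) / N) ^ j) * x ^ j :=
        mul_le_mul_of_nonneg_right keyR (by positivity)
    _ = (N.choose n : ℝ) * ((n.choose j : ℝ) * (((M : ℝ) / N) * x) ^ j) := by
        rw [mul_pow]; ring
open Classical in
theorem hypergeom_hoeffding_tail (N M n : ℕ) (hM0 : 0 < M) (hMN : M < N)
    (hnN : n ≤ N) (hn : 0 < n) (t : ℝ) (ht : 0 ≤ t)
    (hpt : (M : ℝ) / N + t < 1) :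
    ∑ i ∈ (Finset.range (n + 1)).filter (fun (i : ℕ) => ((M : ℝ) / N + t) * n ≤ (i : ℝ)),
        ((M.choose i * (N - M).choose (n - i) : ℝ) / (N.choose n : ℝ))
      ≤ (((M : ℝ) / N / ((M : ℝ) / N + t)) ^ ((M : ℝ) / N + t)
          * ((1 - (M : ℝ) / N) / (1 - (M : ℝ) / N - t)) ^ (1 - (M : ℝ) / N - t)) ^ (n : ℝ) := by
  have hN : 0 < N := by omega
  have hNR : (0 : ℝ) < N := by exact_mod_cast hN
  set p : ℝ := (M : ℝ) / N with hp
  have hp0 : 0 < p := div_pos (by exact_mod_cast hM0) hNR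
  have hp1 : p < 1 := by rw [hp, div_lt_one hNR]; exact_mod_cast hMN
  rw [show (1 : ℝ) - p - t = 1 - (p + t) by ring]
  set q : ℝ := p + t with hq
  have hq0 : 0 < q := by rw [hq]; linarith
  have hq1 : q < 1 := hpt
  have h1q : 0 < 1 - q := by linarith
  have h1p : 0 < 1 - p := by linarith
  have hpq : p ≤ q := by rw [hq]; linarith
  set a : ℝ := p / q with ha
  set b : ℝ := (1 - p) / (1 - q) with hb
  have ha0 : 0 < a := div_pos hp0 hq0
  have hb0 : 0 < b := div_pos h1p h1q
  have hb1 : 1 ≤ b := by rw [hb, le_div_iff₀ h1q]; linarith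
  set lam : ℝ := b / a with hlam
  have hlam0 : 0 < lam := div_pos hb0 ha0
  have hlam1 : 1 ≤ lam := by
    rw [hlam, le_div_iff₀ ha0, one_mul]
    calc a ≤ 1 := by rw [ha, div_le_one hq0]; exact hpq
      _ ≤ b := hb1
  set k : ℝ := q * n with hk
  set c : ℝ := lam ^ (-k) with hc
  have hc0 : 0 < c := Real.rpow_pos_of_pos hlam0 _
  have hB : (0 : ℝ) < (N.choose n : ℝ) := by exact_mod_cast Nat.choose_pos hnN
  have hfac : ∀ i : ℕ, k ≤ (i : ℝ) → (1 : ℝ) ≤ lam ^ i * c := by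
    intro i hik
    have : lam ^ i * c = lam ^ ((i : ℝ) - k) := by
      rw [hc, ← Real.rpow_natCast lam i, ← Real.rpow_add hlam0]
      ring_nf
    rw [this, ← Real.rpow_zero lam]
    exact Real.rpow_le_rpow_of_exponent_le hlam1 (by linarith)
  have hbase : 1 + p * (lam - 1) = b := by
    rw [hlam, ha, hb]
    field_simp
    ring
  have main : ∑ i ∈ (Finset.range (n + 1)).filter (fun (i : ℕ) => k ≤ (i : ℝ)),
      ((M.choose i * (N - M).choose (n - i) : ℝ) / (N.choose n : ℝ)) ≤ c * b ^ n := by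
    calc ∑ i ∈ (Finset.range (n + 1)).filter (fun (i : ℕ) => k ≤ (i : ℝ)),
        ((M.choose i * (N - M).choose (n - i) : ℝ) / (N.choose n : ℝ))
        ≤ ∑ i ∈ (Finset.range (n + 1)).filter (fun (i : ℕ) => k ≤ (i : ℝ)),
          ((M.choose i * (N - M).choose (n - i) : ℝ) / (N.choose n : ℝ)) * (lam ^ i * c) := by
          apply Finset.sum_le_sum
          intro i hi
          have hik : k ≤ (i : ℝ) := (Finset.mem_filter.mp hi).2
          exact le_mul_of_one_le_right (by positivity) (hfac i hik)
      _ ≤ ∑ i ∈ Finset.range (n + 1),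
          ((M.choose i * (N - M).choose (n - i) : ℝ) / (N.choose n : ℝ)) * (lam ^ i * c) := by
          apply Finset.sum_le_sum_of_subset_of_nonneg (Finset.filter_subset _ _)
          intro i _ _
          positivity
      _ = (c / (N.choose n : ℝ)) * ∑ i ∈ Finset.range (n + 1),
          (M.choose i * (N - M).choose (n - i) : ℝ) * lam ^ i := by
          rw [Finset.mul_sum]
          exact Finset.sum_congr rfl fun i _ => by ring
      _ ≤ (c / (N.choose n : ℝ)) * ((N.choose n : ℝ) * (1 + p * (lam - 1)) ^ n) := by
          apply mul_le_mul_of_nonneg_left _ (by positivity)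
          have hcb := chv_bound M N n (le_of_lt hMN) hN hnN (lam - 1) (by linarith)
          rw [sub_add_cancel] at hcb
          exact hcb
      _ = c * (1 + p * (lam - 1)) ^ n := by field_simp
      _ = c * b ^ n := by rw [hbase]
  have eqRHS : c * b ^ n = (a ^ q * b ^ (1 - q)) ^ (n : ℝ) := by
    rw [Real.mul_rpow (Real.rpow_nonneg ha0.le _) (Real.rpow_nonneg hb0.le _),
      ← Real.rpow_mul ha0.le, ← Real.rpow_mul hb0.le]
    have hc' : c = a ^ k * b ^ (-k) := by
      rw [hc, hlam, Real.rpow_neg (div_nonneg hb0.le ha0.le), Real.div_rpow hb0.le ha0.le,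
        inv_div, Real.rpow_neg hb0.le, div_eq_mul_inv]
    rw [hc', ← Real.rpow_natCast b n, mul_assoc, ← Real.rpow_add hb0, hk,
      show -(q * (n : ℝ)) + (n : ℝ) = (1 - q) * (n : ℝ) by ring]
  exact le_of_le_of_eq main eqRHS
end

section
/- Chvátal's exponential upper-tail inequality for the hypergeometric distribution: with p = M/N, t ≥ 0, and k = (p+t)·n, one has H(M,N,n,k) ≤ exp(−2t²n). -/
lemma descFac_mul_pow_le (M N j : ℕ) (hMN : M ≤ N) :
    M.descFactorial j * N ^ j ≤ N.descFactorial j * M ^ j := by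
  have hc : ∀ K : ℕ, K ^ j = ∏ _i ∈ Finset.range j, K := by simp
  rw [Nat.descFactorial_eq_prod_range, Nat.descFactorial_eq_prod_range, hc, hc,
    ← Finset.prod_mul_distrib, ← Finset.prod_mul_distrib]
  apply Finset.prod_le_prod'
  intro i _
  rw [Nat.sub_mul, Nat.sub_mul]
  exact tsub_le_tsub (le_of_eq (Nat.mul_comm M N)) (Nat.mul_le_mul_left i hMN)

lemma choose_mul_pow_le (M N j : ℕ) (hMN : M ≤ N) :
    M.choose j * N ^ j ≤ N.choose j * M ^ j := by
  have h := descFac_mul_pow_le M N j hMN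
  rw [Nat.descFactorial_eq_factorial_mul_choose, Nat.descFactorial_eq_factorial_mul_choose] at h
  have hj : 0 < j.factorial := Nat.factorial_pos j
  calc M.choose j * N ^ j = j.factorial * (M.choose j * N ^ j) / j.factorial := by
        rw [Nat.mul_div_cancel_left _ hj]
    _ ≤ j.factorial * (N.choose j * M ^ j) / j.factorial := by
        apply Nat.div_le_div_right
        rw [← Nat.mul_assoc, ← Nat.mul_assoc]; exact h
    _ = N.choose j * M ^ j := Nat.mul_div_cancel_left _ hj

lemma moment_id (M N n j : ℕ) (hMN : M ≤ N) (hjn : j ≤ n) :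
    ∑ i ∈ Finset.range (n + 1), M.choose i * (N - M).choose (n - i) * i.choose j
      = M.choose j * (N - j).choose (n - j) := by
  by_cases hjM : j ≤ M
  · have hsub : Finset.Ico j (n + 1) ⊆ Finset.range (n + 1) := by
      intro x hx; simp only [Finset.mem_Ico] at hx; exact Finset.mem_range.2 hx.2
    rw [← Finset.sum_subset hsub (by
      intro x hxm hx
      simp only [Finset.mem_Ico, not_and, not_lt] at hx
      have hxr := Finset.mem_range.1 hxm
      have hxj : x < j := by
        by_contra h
        exact absurd hxr (not_lt.2 (hx (le_of_not_gt h)))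
      rw [Nat.choose_eq_zero_of_lt hxj, Nat.mul_zero])]
    rw [Finset.sum_Ico_eq_sum_range]
    have hrange : n + 1 - j = (n - j) + 1 := by omega
    rw [hrange]
    have hterm : ∀ l, M.choose (j + l) * (N - M).choose (n - (j + l)) * (j + l).choose j
        = M.choose j * ((M - j).choose l * (N - M).choose (n - j - l)) := by
      intro l
      rw [← Nat.sub_sub]
      by_cases hlM : j + l ≤ M
      · have := Nat.choose_mul (n := M) (Nat.le_add_right j l)
        simp only [Nat.add_sub_cancel_left] at this
        rw [Nat.mul_right_comm, this, Nat.mul_assoc]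
      · rw [Nat.choose_eq_zero_of_lt (by omega), Nat.choose_eq_zero_of_lt (show M - j < l by omega)]
        simp
    simp only [hterm]
    rw [← Finset.mul_sum]
    congr 1
    have hV := Nat.add_choose_eq (M - j) (N - M) (n - j)
    rw [Finset.Nat.sum_antidiagonal_eq_sum_range_succ_mk] at hV
    have : M - j + (N - M) = N - j := by omega
    rw [this] at hV
    exact hV.symm
  · rw [Nat.choose_eq_zero_of_lt (by omega), Nat.zero_mul]
    apply Finset.sum_eq_zero
    intro i _
    by_cases hij : i < j
    · rw [Nat.choose_eq_zero_of_lt hij, Nat.mul_zero]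
    · rw [Nat.choose_eq_zero_of_lt (show M < i by omega), Nat.zero_mul, Nat.zero_mul]



lemma mgf_bound (M N n : ℕ) (hMN : M ≤ N) (hnN : n ≤ N) (hN : 0 < N) (y : ℝ) (hy : 1 ≤ y) :
    ∑ i ∈ Finset.range (n + 1),
        (M.choose i * (N - M).choose (n - i) : ℝ) * y ^ i
      ≤ (N.choose n : ℝ) * (1 - (M : ℝ) / N + (M : ℝ) / N * y) ^ n := by
  set p : ℝ := (M : ℝ) / N with hp
  set z : ℝ := y - 1 with hzdef
  have hz : 0 ≤ z := by simp [hzdef]; linarith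
  have hyz : y = z + 1 := by ring
  have hp0 : 0 ≤ p := by positivity
  -- expand y^i by the binomial theorem
  have hbin : ∀ i : ℕ, y ^ i = ∑ j ∈ Finset.range (i + 1), z ^ j * (i.choose j : ℝ) := by
    intro i
    rw [hyz, add_pow]
    exact Finset.sum_congr rfl (by intro j _; simp)
  calc ∑ i ∈ Finset.range (n + 1), (M.choose i * (N - M).choose (n - i) : ℝ) * y ^ i
      = ∑ i ∈ Finset.range (n + 1), ∑ j ∈ Finset.range (n + 1),
          (M.choose i * (N - M).choose (n - i) : ℝ) * (z ^ j * (i.choose j : ℝ)) := by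
        apply Finset.sum_congr rfl
        intro i hi
        rw [hbin i, Finset.mul_sum]
        apply Finset.sum_subset
        · intro x hx
          simp only [Finset.mem_range] at hx hi ⊢
          omega
        · intro x _ hx
          simp only [Finset.mem_range, not_lt] at hx
          simp only [Finset.mem_range] at hi
          rw [Nat.choose_eq_zero_of_lt (show i < x by omega)]
          simp
    _ = ∑ j ∈ Finset.range (n + 1), z ^ j *
          ∑ i ∈ Finset.range (n + 1), (M.choose i * (N - M).choose (n - i) : ℝ) * (i.choose j : ℝ) := by
        rw [Finset.sum_comm]
        apply Finset.sum_congr rfl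
        intro j _
        rw [Finset.mul_sum]
        apply Finset.sum_congr rfl
        intro i _
        ring
    _ = ∑ j ∈ Finset.range (n + 1), z ^ j *
          ((M.choose j : ℝ) * ((N - j).choose (n - j) : ℝ)) := by
        apply Finset.sum_congr rfl
        intro j hj
        congr 1
        have := moment_id M N n j hMN (by simpa using Nat.lt_succ_iff.1 (Finset.mem_range.1 hj))
        exact_mod_cast congrArg (fun x : ℕ => (x : ℝ)) this
    _ ≤ ∑ j ∈ Finset.range (n + 1), z ^ j *
          ((N.choose n : ℝ) * (n.choose j : ℝ) * p ^ j) := by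
        apply Finset.sum_le_sum
        intro j hj
        have hjn : j ≤ n := Nat.lt_succ_iff.1 (Finset.mem_range.1 hj)
        apply mul_le_mul_of_nonneg_left _ (pow_nonneg hz j)
        -- key: M.choose j * (N-j).choose (n-j) ≤ N.choose n * n.choose j * p^j
        have hkey : (N.choose n : ℝ) * (n.choose j : ℝ) = (N.choose j : ℝ) * ((N - j).choose (n - j) : ℝ) := by
          exact_mod_cast congrArg (fun x : ℕ => (x : ℝ)) (Nat.choose_mul (n := N) hjn)
        have h3 : (M.choose j : ℝ) ≤ (N.choose j : ℝ) * p ^ j := by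
          have h := choose_mul_pow_le M N j hMN
          have hNj : (0:ℝ) < (N:ℝ) ^ j := by positivity
          rw [hp, div_pow, ← mul_div_assoc, le_div_iff₀ hNj]
          exact_mod_cast h
        have hC : (0:ℝ) ≤ ((N - j).choose (n - j) : ℝ) := by positivity
        calc (M.choose j : ℝ) * ((N - j).choose (n - j) : ℝ)
            ≤ (N.choose j : ℝ) * p ^ j * ((N - j).choose (n - j) : ℝ) :=
              mul_le_mul_of_nonneg_right h3 hC
          _ = (N.choose j : ℝ) * ((N - j).choose (n - j) : ℝ) * p ^ j := by ring
          _ = (N.choose n : ℝ) * (n.choose j : ℝ) * p ^ j := by rw [← hkey]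
    _ = (N.choose n : ℝ) * ∑ j ∈ Finset.range (n + 1), (p * z) ^ j * 1 ^ (n - j) * (n.choose j : ℝ) := by
        rw [Finset.mul_sum]
        apply Finset.sum_congr rfl
        intro j _
        rw [mul_pow]
        ring
    _ = (N.choose n : ℝ) * (p * z + 1) ^ n := by rw [← add_pow]
    _ = (N.choose n : ℝ) * (1 - p + p * y) ^ n := by rw [hyz]; ring_nf


open Real in
lemma bernoulli_mgf (p : ℝ) (hp0 : 0 ≤ p) (hp1 : p ≤ 1) (s : ℝ) (hs : 0 ≤ s) :
    1 - p + p * exp s ≤ exp (p * s + s ^ 2 / 8) := by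
  set D : ℝ → ℝ := fun u => 1 - p + p * exp u with hD
  have hDpos : ∀ u : ℝ, 0 ≤ u → 0 < D u := by
    intro u hu
    have h1 : 1 ≤ exp u := one_le_exp hu
    have : 1 ≤ D u := by simp only [hD]; nlinarith
    linarith
  have hDderiv : ∀ u : ℝ, HasDerivAt D (p * exp u) u := by
    intro u
    exact ((Real.hasDerivAt_exp u).const_mul p).const_add (1 - p)
  set g : ℝ → ℝ := fun u => p + u / 4 - p * exp u / D u with hg
  -- derivative of φ := p u + u²/8 - log (D u) is g
  have hphi : ∀ u : ℝ, 0 ≤ u →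
      HasDerivAt (fun v => p * v + v ^ 2 / 8 - log (D v)) (g u) u := by
    intro u hu
    have h1 : HasDerivAt (fun v : ℝ => p * v) p u := by
      simpa using (hasDerivAt_id u).const_mul p
    have h2 : HasDerivAt (fun v : ℝ => v ^ 2 / 8) (u / 4) u := by
      have := (hasDerivAt_pow 2 u).div_const 8
      simpa using this.congr_deriv (by ring)
    have h3 : HasDerivAt (fun v => log (D v)) (p * exp u / D u) u :=
      (hDderiv u).log (ne_of_gt (hDpos u hu))
    exact (h1.add h2).sub h3
  -- derivative of g
  have hgderiv : ∀ u : ℝ, 0 ≤ u →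
      HasDerivAt g (1 / 4 - p * (1 - p) * exp u / (D u) ^ 2) u := by
    intro u hu
    have h1 : HasDerivAt (fun v : ℝ => p + v / 4) (1 / 4) u := by
      simpa using ((hasDerivAt_id u).div_const 4).const_add p
    have h2 : HasDerivAt (fun v => p * exp v / D v)
        ((p * exp u * D u - p * exp u * (p * exp u)) / (D u) ^ 2) u :=
      ((Real.hasDerivAt_exp u).const_mul p).div (hDderiv u) (ne_of_gt (hDpos u hu))
    have h2' : HasDerivAt (fun v => p * exp v / D v) (p * (1 - p) * exp u / (D u) ^ 2) u := by
      convert h2 using 1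
      simp only [hD]
      ring
    exact h1.sub h2'
  -- g' ≥ 0 on [0, ∞)
  have hg'nonneg : ∀ u ∈ Set.Ioi (0:ℝ), 0 ≤ 1 / 4 - p * (1 - p) * exp u / (D u) ^ 2 := by
    intro u hu
    have hu0 : (0:ℝ) ≤ u := le_of_lt hu
    have hD2 : 0 < (D u) ^ 2 := pow_pos (hDpos u hu0) 2
    rw [sub_nonneg, div_le_iff₀ hD2]
    have hexp : 0 < exp u := exp_pos u
    have : 4 * (p * ((1 - p) * exp u)) ≤ ((1 - p) + p * exp u) ^ 2 := by nlinarith [sq_nonneg ((1 - p) - p * exp u)]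
    simp only [hD]
    nlinarith
  -- g is monotone on Ici 0
  have hgmono : MonotoneOn g (Set.Ici (0:ℝ)) := by
    apply monotoneOn_of_deriv_nonneg (convex_Ici 0)
    · intro u hu
      exact ((hgderiv u hu).differentiableAt.continuousAt).continuousWithinAt
    · intro u hu
      rw [interior_Ici] at hu
      exact ((hgderiv u (le_of_lt hu)).differentiableAt).differentiableWithinAt
    · intro u hu
      rw [interior_Ici] at hu
      rw [(hgderiv u (le_of_lt hu)).deriv]
      exact hg'nonneg u hu
  have hg0 : g 0 = 0 := by
    simp only [hg, hD]
    norm_num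
  have hgnonneg : ∀ u : ℝ, 0 ≤ u → 0 ≤ g u := by
    intro u hu
    have := hgmono (Set.mem_Ici.2 le_rfl) (Set.mem_Ici.2 hu) hu
    rwa [hg0] at this
  -- φ is monotone on Ici 0
  have hphimono : MonotoneOn (fun v => p * v + v ^ 2 / 8 - log (D v)) (Set.Ici (0:ℝ)) := by
    apply monotoneOn_of_deriv_nonneg (convex_Ici 0)
    · intro u hu
      exact ((hphi u hu).differentiableAt.continuousAt).continuousWithinAt
    · intro u hu
      rw [interior_Ici] at hu
      exact ((hphi u (le_of_lt hu)).differentiableAt).differentiableWithinAt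
    · intro u hu
      rw [interior_Ici] at hu
      rw [(hphi u (le_of_lt hu)).deriv]
      exact hgnonneg u (le_of_lt hu)
  have hphi0 : p * 0 + 0 ^ 2 / 8 - log (D 0) = 0 := by
    simp [hD]
  have hkey := hphimono (Set.mem_Ici.2 le_rfl) (Set.mem_Ici.2 hs) hs
  simp only at hkey
  rw [hphi0] at hkey
  have hlog : log (D s) ≤ p * s + s ^ 2 / 8 := by linarith
  have := (Real.log_le_iff_le_exp (hDpos s hs)).1 hlog
  simpa [hD] using this



open Classical in
theorem hypergeom_chvatal_tail (N M n : ℕ) (hMN : M ≤ N) (hnN : n ≤ N) (hn : 0 < n)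
    (t : ℝ) (ht : 0 ≤ t) (hpt : (M : ℝ) / N + t ≤ 1) :
    ∑ i ∈ (Finset.range (n + 1)).filter (fun (i : ℕ) => ((M : ℝ) / N + t) * n ≤ (i : ℝ)),
        ((M.choose i * (N - M).choose (n - i) : ℝ) / (N.choose n : ℝ))
      ≤ Real.exp (-2 * t ^ 2 * n) := by
  have hN : 0 < N := lt_of_lt_of_le hn hnN
  set p : ℝ := (M : ℝ) / N with hp
  have hp0 : 0 ≤ p := by positivity
  have hp1 : p ≤ 1 := by
    rw [hp, div_le_one (by exact_mod_cast hN)]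
    exact_mod_cast hMN
  have hCN : (0:ℝ) < (N.choose n : ℝ) := by exact_mod_cast Nat.choose_pos hnN
  set y : ℝ := Real.exp (4 * t) with hy
  have hy1 : 1 ≤ y := Real.one_le_exp (by linarith)
  set w : ℕ → ℝ := fun i => (M.choose i * (N - M).choose (n - i) : ℝ) / (N.choose n : ℝ) with hw
  have hwnn : ∀ i, 0 ≤ w i := by intro i; positivity
  set C : ℝ := Real.exp (-(4 * t * (p + t) * n)) with hC
  have hCpos : 0 < C := Real.exp_pos _
  calc ∑ i ∈ (Finset.range (n + 1)).filter (fun (i : ℕ) => (p + t) * n ≤ (i : ℝ)), w i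
      ≤ ∑ i ∈ (Finset.range (n + 1)).filter (fun (i : ℕ) => (p + t) * n ≤ (i : ℝ)),
          w i * (Real.exp (4 * t * i) * C) := by
        apply Finset.sum_le_sum
        intro i hi
        have hik : (p + t) * n ≤ (i : ℝ) := (Finset.mem_filter.1 hi).2
        have h1 : 1 ≤ Real.exp (4 * t * i) * C := by
          rw [hC, ← Real.exp_add]
          apply Real.one_le_exp
          have : 4 * t * ((p + t) * n) ≤ 4 * t * i :=
            mul_le_mul_of_nonneg_left hik (by linarith)
          nlinarith
        exact le_mul_of_one_le_right (hwnn i) h1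
    _ ≤ ∑ i ∈ Finset.range (n + 1), w i * (Real.exp (4 * t * i) * C) := by
        apply Finset.sum_le_sum_of_subset_of_nonneg (Finset.filter_subset _ _)
        intro i _ _
        have := Real.exp_pos (4 * t * i)
        have := hwnn i
        positivity
    _ = C * ((N.choose n : ℝ))⁻¹ *
          ∑ i ∈ Finset.range (n + 1), (M.choose i * (N - M).choose (n - i) : ℝ) * y ^ i := by
        rw [Finset.mul_sum]
        apply Finset.sum_congr rfl
        intro i _
        have hexp : Real.exp (4 * t * i) = y ^ i := by
          rw [hy, ← Real.exp_nat_mul]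
          congr 1
          ring
        rw [hw, hexp]
        field_simp
    _ ≤ C * ((N.choose n : ℝ))⁻¹ * ((N.choose n : ℝ) * (1 - p + p * y) ^ n) := by
        apply mul_le_mul_of_nonneg_left (mgf_bound M N n hMN hnN hN y hy1)
        positivity
    _ = C * (1 - p + p * y) ^ n := by
        field_simp
    _ ≤ C * Real.exp ((4 * p * t + 2 * t ^ 2) * n) := by
        apply mul_le_mul_of_nonneg_left _ (le_of_lt hCpos)
        have hb := bernoulli_mgf p hp0 hp1 (4 * t) (by linarith)
        have hbase : 0 ≤ 1 - p + p * y := by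
          have : (0:ℝ) < Real.exp (4 * t) := Real.exp_pos _
          nlinarith
        calc (1 - p + p * y) ^ n ≤ (Real.exp (p * (4 * t) + (4 * t) ^ 2 / 8)) ^ n := by
              apply pow_le_pow_left₀ hbase
              rw [hy]; exact hb
          _ = Real.exp ((4 * p * t + 2 * t ^ 2) * n) := by
              rw [← Real.exp_nat_mul]
              congr 1
              ring
    _ = Real.exp (-2 * t ^ 2 * n) := by
        rw [hC, ← Real.exp_add]
        congr 1
        ring
end

section
/- Lower tail bound for the hypergeometric distribution: Pr[i ≤ E[i] − t·n] ≤ exp(−2t²n), obtained from the upper tail bound via the color-flip symmetry h(M,N,n,i) = h(N−M,N,n,n−i). -/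
lemma amgm_pow (y w : ℝ) (hy : 0 ≤ y) (hw : 0 ≤ w) (n : ℕ) (hn : 0 < n) :
    y ^ (n - 1) * w ≤ ((((n : ℝ) - 1) * y + w) / n) ^ n := by
  have hn' : (0:ℝ) < n := by exact_mod_cast hn
  have ha : (0:ℝ) ≤ ((n:ℝ) - 1) / n := by
    apply div_nonneg _ hn'.le
    have : (1:ℝ) ≤ n := by exact_mod_cast hn
    linarith
  have hb : (0:ℝ) ≤ 1 / n := by positivity
  have hab : ((n:ℝ) - 1) / n + 1 / n = 1 := by field_simp; ring
  have h := Real.geom_mean_le_arith_mean2_weighted ha hb hy hw hab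
  have hpow := pow_le_pow_left₀ (by positivity) h n
  calc y ^ (n - 1) * w
      = (y ^ (((n:ℝ) - 1) / n) * w ^ ((1:ℝ) / n)) ^ n := by
        rw [mul_pow, ← Real.rpow_natCast (y ^ (((n:ℝ) - 1) / n)) n,
          ← Real.rpow_natCast (w ^ ((1:ℝ) / n)) n,
          ← Real.rpow_mul hy, ← Real.rpow_mul hw]
        rw [div_mul_cancel₀ _ hn'.ne', div_mul_cancel₀ _ hn'.ne', Real.rpow_one]
        congr 1
        rw [show ((n:ℝ) - 1) = ((n - 1 : ℕ) : ℝ) by push_cast [hn]; ring,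
          Real.rpow_natCast]
    _ ≤ (((n:ℝ) - 1) / n * y + 1 / n * w) ^ n := hpow
    _ = ((((n : ℝ) - 1) * y + w) / n) ^ n := by ring_nf

lemma hoeffding_scalar (p : ℝ) (hp0 : 0 ≤ p) (hp1 : p ≤ 1) (x : ℝ) (hx : x ≤ 0) :
    1 - p + p * Real.exp x ≤ Real.exp (p * x + x ^ 2 / 8) := by
  set g : ℝ → ℝ := fun y => 1 - p + p * Real.exp y with hg
  have hgpos : ∀ y, 0 < g y := by
    intro y
    rcases eq_or_lt_of_le hp1 with h | h
    · simp only [hg, ← h]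
      have := Real.exp_pos y; nlinarith
    · have : 0 ≤ p * Real.exp y := by positivity
      simp only [hg]; linarith
  have hgd : ∀ y, HasDerivAt g (p * Real.exp y) y := by
    intro y
    exact ((Real.hasDerivAt_exp y).const_mul p).const_add (1 - p)
  set φ : ℝ → ℝ := fun y => p + y / 4 - p * Real.exp y / g y with hφ
  set F : ℝ → ℝ := fun y => p * y + y ^ 2 / 8 - Real.log (g y) with hF
  have hFd : ∀ y, HasDerivAt F (φ y) y := by
    intro y
    have h1 : HasDerivAt (fun y : ℝ => p * y + y ^ 2 / 8) (p + y / 4) y := by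
      have := ((hasDerivAt_id y).const_mul p).add
        (((hasDerivAt_pow 2 y).div_const 8))
      exact this.congr_deriv (by ring)
    have h2 := (hgd y).log (hgpos y).ne'
    exact h1.sub h2
  -- derivative of φ
  have hφd : ∀ y, HasDerivAt φ (1 / 4 - p * Real.exp y * (1 - p) / (g y) ^ 2) y := by
    intro y
    have hnum : HasDerivAt (fun y : ℝ => p * Real.exp y) (p * Real.exp y) y :=
      (Real.hasDerivAt_exp y).const_mul p
    have hdiv := hnum.div (hgd y) (hgpos y).ne'
    have h1 : HasDerivAt (fun y : ℝ => p + y / 4) (1 / 4) y := by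
      simpa using ((hasDerivAt_id y).div_const 4).const_add p
    have := h1.sub hdiv
    refine this.congr_deriv ?_
    have := (hgpos y).ne'
    simp only [hg]
    ring
  have hφmono : Monotone φ := by
    apply monotone_of_deriv_nonneg
    · intro y; exact (hφd y).differentiableAt
    · intro y
      rw [(hφd y).deriv]
      have hgy := hgpos y
      have he : 0 ≤ p * Real.exp y := by positivity
      have hsq : 0 ≤ ((1 - p) - p * Real.exp y) ^ 2 := sq_nonneg _
      rw [sub_nonneg, div_le_iff₀ (by positivity)]
      have : (g y) ^ 2 = (1 - p + p * Real.exp y) ^ 2 := by simp [hg]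
      nlinarith [Real.exp_pos y]
  have hφ0 : φ 0 = 0 := by simp [hφ, hg]
  have hφle : ∀ y ≤ 0, φ y ≤ 0 := fun y hy => hφ0 ▸ hφmono hy
  have hFanti : AntitoneOn F (Set.Iic 0) := by
    apply antitoneOn_of_deriv_nonpos (convex_Iic 0)
    · exact fun y _ => ((hFd y).differentiableAt).continuousAt.continuousWithinAt
    · exact fun y _ => ((hFd y).differentiableAt).differentiableWithinAt
    · intro y hy
      rw [(hFd y).deriv]
      exact hφle y (le_of_lt (by simpa using hy))
  have hF0 : F 0 = 0 := by simp [hF, hg]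
  have : F 0 ≤ F x := hFanti (Set.mem_Iic.2 hx) (Set.mem_Iic.2 le_rfl) hx
  rw [hF0] at this
  have hlog : Real.log (g x) ≤ p * x + x ^ 2 / 8 := by
    simp only [hF] at this; linarith
  exact (Real.log_le_iff_le_exp (hgpos x)).1 hlog

lemma hyp_step (N n M : ℕ) (hn : 0 < n) (hnN : n ≤ N) (hM : M < N) (hM0 : 0 < M)
    (s : ℝ) (hs0 : 0 ≤ s) (hs1 : s ≤ 1) :
    ((N-1).choose n : ℝ) * (1 - (M:ℝ)/((N-1:ℕ):ℝ) + (M:ℝ)/((N-1:ℕ):ℝ) * s) ^ n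
      + ((N-1).choose (n-1) : ℝ)
        * (1 - (M:ℝ)/((N-1:ℕ):ℝ) + (M:ℝ)/((N-1:ℕ):ℝ) * s) ^ (n-1)
      ≤ (N.choose n : ℝ) * (1 - (M:ℝ)/(N:ℝ) + (M:ℝ)/(N:ℝ) * s) ^ n := by
  have hN2 : 2 ≤ N := by omega
  have hNpos : (0:ℝ) < N := by exact_mod_cast (by omega : 0 < N)
  have hcastN1 : ((N - 1 : ℕ) : ℝ) = (N : ℝ) - 1 := by
    push_cast [(by omega : 1 ≤ N)]; ring
  have hN1R : (0:ℝ) < (N:ℝ) - 1 := by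
    have : (2:ℝ) ≤ N := by exact_mod_cast hN2
    linarith
  have hnR : (0:ℝ) < n := by exact_mod_cast hn
  have hNn : (0:ℝ) ≤ (N:ℝ) - n := by
    have : (n:ℝ) ≤ N := by exact_mod_cast hnN
    linarith
  obtain ⟨y, hydef⟩ : ∃ y : ℝ, y = 1 - (M:ℝ)/((N-1:ℕ):ℝ) + (M:ℝ)/((N-1:ℕ):ℝ) * s :=
    ⟨_, rfl⟩
  rw [← hydef]
  have hm1 : (M:ℝ)/((N-1:ℕ):ℝ) ≤ 1 := by
    rw [hcastN1, div_le_one hN1R]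
    have : (M:ℝ) + 1 ≤ N := by exact_mod_cast hM
    linarith
  have hmnn : (0:ℝ) ≤ (M:ℝ)/((N-1:ℕ):ℝ) := by rw [hcastN1]; positivity
  have hynn : 0 ≤ y := by rw [hydef]; nlinarith
  -- choose identities
  have id1 : ((N-1).choose (n-1) : ℝ) * N = (N.choose n : ℝ) * n := by
    have h := Nat.add_one_mul_choose_eq (N-1) (n-1)
    have hNs : N - 1 + 1 = N := by omega
    have hns : n - 1 + 1 = n := by omega
    rw [hNs, hns] at h
    have h' := congrArg (Nat.cast : ℕ → ℝ) h
    push_cast at h'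
    linarith
  have idPascal : (N.choose n : ℝ) = ((N-1).choose n : ℝ) + ((N-1).choose (n-1) : ℝ) := by
    have hkey : N.choose n = (N-1).choose (n-1) + (N-1).choose n := by
      have h1 : N = (N-1) + 1 := by omega
      have h2 : n = (n-1) + 1 := by omega
      rw [h1, h2]
      exact Nat.choose_succ_succ _ _
    rw [hkey]; push_cast; ring
  have id2 : ((N-1).choose n : ℝ) * N = (N.choose n : ℝ) * ((N:ℝ) - n) := by
    nlinarith [id1, idPascal]
  obtain ⟨w, hwdef⟩ : ∃ w : ℝ, w = (((N:ℝ) - n) * y + n) / N := ⟨_, rfl⟩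
  have hwnn : 0 ≤ w := by rw [hwdef]; positivity
  have hyn : y ^ n = y ^ (n-1) * y := by
    rw [← pow_succ]; congr 1; omega
  have heq : ((N-1).choose n : ℝ) * y ^ n + ((N-1).choose (n-1) : ℝ) * y ^ (n-1)
      = (N.choose n : ℝ) * (y ^ (n-1) * w) := by
    have hNw : (N:ℝ) * w = ((N:ℝ) - n) * y + n := by
      rw [hwdef]; field_simp
    rw [hyn]
    apply mul_left_cancel₀ hNpos.ne'
    linear_combination (y ^ (n-1) * y) * id2 + y ^ (n-1) * id1
      - ((N.choose n : ℝ) * y ^ (n-1)) * hNw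
  have hzw : (((n:ℝ) - 1) * y + w) / n = 1 - (M:ℝ)/(N:ℝ) + (M:ℝ)/(N:ℝ) * s := by
    rw [hwdef, hydef, hcastN1]
    field_simp
    ring
  have hamgm := amgm_pow y w hynn hwnn n hn
  rw [hzw] at hamgm
  have hcnn : (0:ℝ) ≤ (N.choose n : ℝ) := by positivity
  rw [heq]
  exact mul_le_mul_of_nonneg_left hamgm hcnn

lemma hyp_mgf (s : ℝ) (hs0 : 0 ≤ s) (hs1 : s ≤ 1) :
    ∀ N, ∀ M n : ℕ, M ≤ N → 0 < N →
    ∑ k ∈ Finset.range (n + 1),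
        ((M.choose k : ℝ) * ((N - M).choose (n - k) : ℝ)) * s ^ k
      ≤ (N.choose n : ℝ) * (1 - (M : ℝ) / N + (M : ℝ) / N * s) ^ n := by
  intro N
  induction N using Nat.strong_induction_on with
  | _ N ih =>
    intro M n hMN hN
    have hNpos : (0:ℝ) < N := by exact_mod_cast hN
    have hpnn : (0:ℝ) ≤ (M : ℝ) / N := by positivity
    have hp1 : (M : ℝ) / N ≤ 1 := by
      rw [div_le_one hNpos]; exact_mod_cast hMN
    have hznn : (0:ℝ) ≤ 1 - (M : ℝ) / N + (M : ℝ) / N * s := by nlinarith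
    by_cases hM0 : M = 0
    · subst hM0
      rw [Finset.sum_eq_single_of_mem 0 (Finset.mem_range.2 (Nat.succ_pos n))]
      · simp
      · intro k _ hk
        have : Nat.choose 0 k = 0 := Nat.choose_eq_zero_of_lt (Nat.pos_of_ne_zero hk)
        simp [this]
    by_cases hMeq : M = N
    · subst hMeq
      rw [Finset.sum_eq_single_of_mem n (Finset.self_mem_range_succ n)]
      · simp [div_self hNpos.ne']
      · intro k hk hkn
        have hklt : k < n := lt_of_le_of_ne (Nat.lt_succ_iff.1 (Finset.mem_range.1 hk)) hkn
        have h0 : Nat.choose 0 (n - k) = 0 := Nat.choose_eq_zero_of_lt (by omega)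
        simp [Nat.sub_self, h0]
    by_cases hn0 : n = 0
    · subst hn0; simp
    by_cases hnN : N < n
    · have hz : ∀ k ∈ Finset.range (n + 1),
          ((M.choose k : ℝ) * ((N - M).choose (n - k) : ℝ)) * s ^ k = 0 := by
        intro k _
        by_cases hkM : M < k
        · simp [Nat.choose_eq_zero_of_lt hkM]
        · have : N - M < n - k := by omega
          simp [Nat.choose_eq_zero_of_lt this]
      rw [Finset.sum_eq_zero hz]
      positivity
    push_neg at hnN
    have hMlt : M < N := lt_of_le_of_ne hMN hMeq
    have hMpos : 0 < M := Nat.pos_of_ne_zero hM0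
    have hnpos : 0 < n := Nat.pos_of_ne_zero hn0
    -- recursion
    have hrec : ∑ k ∈ Finset.range (n + 1),
          ((M.choose k : ℝ) * ((N - M).choose (n - k) : ℝ)) * s ^ k
        = (∑ k ∈ Finset.range (n + 1),
            ((M.choose k : ℝ) * (((N-1) - M).choose (n - k) : ℝ)) * s ^ k)
          + ∑ k ∈ Finset.range ((n-1) + 1),
            ((M.choose k : ℝ) * (((N-1) - M).choose ((n-1) - k) : ℝ)) * s ^ k := by
      have hn1 : (n - 1) + 1 = n := by omega
      rw [hn1, Finset.sum_range_succ, Finset.sum_range_succ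
        (fun k => ((M.choose k : ℝ) * (((N-1) - M).choose (n - k) : ℝ)) * s ^ k)]
      have hlast : ((M.choose n : ℝ) * (((N - M)).choose (n - n) : ℝ)) * s ^ n
          = ((M.choose n : ℝ) * (((N-1) - M).choose (n - n) : ℝ)) * s ^ n := by
        simp [Nat.sub_self]
      rw [hlast]
      have hsplit : ∑ k ∈ Finset.range n,
            ((M.choose k : ℝ) * ((N - M).choose (n - k) : ℝ)) * s ^ k
          = ∑ k ∈ Finset.range n,
            (((M.choose k : ℝ) * (((N-1) - M).choose (n - k) : ℝ)) * s ^ k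
              + ((M.choose k : ℝ) * (((N-1) - M).choose ((n-1) - k) : ℝ)) * s ^ k) := by
        apply Finset.sum_congr rfl
        intro k hk
        have hkn : k < n := Finset.mem_range.1 hk
        have h1 : N - M = ((N-1) - M) + 1 := by omega
        have h2 : n - k = ((n-1) - k) + 1 := by omega
        have key : (N - M).choose (n - k)
            = ((N-1) - M).choose ((n-1) - k) + ((N-1) - M).choose (n - k) := by
          rw [h1, h2]
          exact Nat.choose_succ_succ _ _
        rw [key]
        push_cast
        ring
      rw [hsplit, Finset.sum_add_distrib]
      ring
    rw [hrec]
    have hN1pos : 0 < N - 1 := by omega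
    have hMN1 : M ≤ N - 1 := by omega
    have ihn := ih (N-1) (by omega) M n hMN1 hN1pos
    have ihn1 := ih (N-1) (by omega) M (n-1) hMN1 hN1pos
    calc _ ≤ ((N-1).choose n : ℝ) * (1 - (M:ℝ)/((N-1:ℕ):ℝ) + (M:ℝ)/((N-1:ℕ):ℝ) * s) ^ n
          + ((N-1).choose (n-1) : ℝ)
            * (1 - (M:ℝ)/((N-1:ℕ):ℝ) + (M:ℝ)/((N-1:ℕ):ℝ) * s) ^ (n-1) :=
          add_le_add ihn ihn1
      _ ≤ _ := hyp_step N n M hnpos hnN hMlt hMpos s hs0 hs1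

open Classical in
theorem hypergeom_lower_tail_expectation (N M n : ℕ) (hMN : M ≤ N) (hnN : n ≤ N)
    (hN : 0 < N) (hn : 0 < n) (t : ℝ) (ht : 0 ≤ t) :
    ∑ i ∈ (Finset.range (n + 1)).filter
        (fun (i : ℕ) => (i : ℝ) ≤ (n : ℝ) * M / N - t * n),
        ((M.choose i * (N - M).choose (n - i) : ℝ) / (N.choose n : ℝ))
      ≤ Real.exp (-2 * t ^ 2 * n) := by
  set p : ℝ := (M : ℝ) / N with hp
  set a : ℝ := (n : ℝ) * M / N - t * n with ha
  set s : ℝ := Real.exp (-(4 * t)) with hs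
  have hs0 : 0 < s := Real.exp_pos _
  have hs1 : s ≤ 1 := Real.exp_le_one_iff.2 (by linarith)
  have hNpos : (0:ℝ) < N := by exact_mod_cast hN
  have hC : (0:ℝ) < (N.choose n : ℝ) := by exact_mod_cast (Nat.choose_pos hnN)
  have hterm : ∀ i : ℕ, (0:ℝ) ≤ (M.choose i * (N - M).choose (n - i) : ℝ) / (N.choose n : ℝ) := by
    intro i; positivity
  -- step 1: tail ≤ sum over the whole range of pmf * s^i / s^a
  have step1 : ∑ i ∈ (Finset.range (n + 1)).filter
        (fun (i : ℕ) => (i : ℝ) ≤ (n : ℝ) * M / N - t * n),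
        ((M.choose i * (N - M).choose (n - i) : ℝ) / (N.choose n : ℝ))
      ≤ ∑ i ∈ Finset.range (n + 1),
        ((M.choose i * (N - M).choose (n - i) : ℝ) / (N.choose n : ℝ)) * s ^ i / s ^ a := by
    calc _ ≤ ∑ i ∈ (Finset.range (n + 1)).filter
            (fun (i : ℕ) => (i : ℝ) ≤ (n : ℝ) * M / N - t * n),
            ((M.choose i * (N - M).choose (n - i) : ℝ) / (N.choose n : ℝ)) * s ^ i / s ^ a := by
          apply Finset.sum_le_sum
          intro i hi
          have hia : (i : ℝ) ≤ a := by
            rw [ha]; exact (Finset.mem_filter.1 hi).2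
          have hsa : s ^ a ≤ s ^ (i:ℝ) := Real.rpow_le_rpow_of_exponent_ge hs0 hs1 hia
          have hsi : s ^ a ≤ s ^ i := by rwa [Real.rpow_natCast] at hsa
          have hsapos : (0:ℝ) < s ^ a := Real.rpow_pos_of_pos hs0 a
          rw [← sub_nonneg]
          have : ((M.choose i * (N - M).choose (n - i) : ℝ) / (N.choose n : ℝ)) * s ^ i / s ^ a
              - ((M.choose i * (N - M).choose (n - i) : ℝ) / (N.choose n : ℝ))
              = ((M.choose i * (N - M).choose (n - i) : ℝ) / (N.choose n : ℝ))
                * ((s ^ i - s ^ a) / s ^ a) := by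
            field_simp
          rw [this]
          apply mul_nonneg (hterm i)
          apply div_nonneg _ hsapos.le
          linarith
      _ ≤ _ := by
          apply Finset.sum_le_sum_of_subset_of_nonneg (Finset.filter_subset _ _)
          intro i _ _
          have hsapos : (0:ℝ) < s ^ a := Real.rpow_pos_of_pos hs0 a
          have := hterm i
          positivity
  have hp0 : 0 ≤ p := by rw [hp]; positivity
  have hp1 : p ≤ 1 := by
    rw [hp, div_le_one hNpos]; exact_mod_cast hMN
  have hznn : (0:ℝ) ≤ 1 - p + p * s := by nlinarith
  -- step 2: the mgf bound
  have hsum : ∑ i ∈ Finset.range (n + 1),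
        ((M.choose i * (N - M).choose (n - i) : ℝ) / (N.choose n : ℝ)) * s ^ i
      ≤ (1 - p + p * s) ^ n := by
    have h := hyp_mgf s hs0.le hs1 N M n hMN hN
    have hrw : ∑ i ∈ Finset.range (n + 1),
          ((M.choose i * (N - M).choose (n - i) : ℝ) / (N.choose n : ℝ)) * s ^ i
        = (∑ i ∈ Finset.range (n + 1),
            ((M.choose i : ℝ) * ((N - M).choose (n - i) : ℝ)) * s ^ i) / (N.choose n : ℝ) := by
      rw [Finset.sum_div]
      apply Finset.sum_congr rfl
      intro i _
      push_cast
      ring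
    rw [hrw, div_le_iff₀ hC]
    calc _ ≤ (N.choose n : ℝ) * (1 - (M : ℝ) / N + (M : ℝ) / N * s) ^ n := h
      _ = (1 - p + p * s) ^ n * (N.choose n : ℝ) := by rw [hp]; ring
  have step2 : ∑ i ∈ Finset.range (n + 1),
        ((M.choose i * (N - M).choose (n - i) : ℝ) / (N.choose n : ℝ)) * s ^ i / s ^ a
      ≤ (1 - p + p * s) ^ n / s ^ a := by
    rw [← Finset.sum_div]
    have hsapos : (0:ℝ) < s ^ a := Real.rpow_pos_of_pos hs0 a
    gcongr
  -- step 3: calculus bound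
  have step3 : (1 - p + p * s) ^ n / s ^ a ≤ Real.exp (-2 * t ^ 2 * n) := by
    have hbody : 1 - p + p * s ≤ Real.exp (p * (-(4 * t)) + (-(4 * t)) ^ 2 / 8) :=
      hoeffding_scalar p hp0 hp1 (-(4 * t)) (by linarith)
    have hpow : (1 - p + p * s) ^ n
        ≤ Real.exp ((n : ℝ) * (p * (-(4 * t)) + (-(4 * t)) ^ 2 / 8)) := by
      rw [Real.exp_nat_mul]
      exact pow_le_pow_left₀ hznn hbody n
    have hsa : s ^ a = Real.exp (-(4 * t) * a) := by
      rw [hs, Real.rpow_def_of_pos (Real.exp_pos _), Real.log_exp]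
    rw [hsa, div_le_iff₀ (Real.exp_pos _), ← Real.exp_add]
    apply (hpow.trans (le_of_eq ?_))
    congr 1
    rw [ha, hp]
    ring
  exact step1.trans (step2.trans step3)
end

section
/- The Hoeffding bound implies the Chvátal bound: for all p ∈ [0,1] and t ≥ 0 with p + t ≤ 1, (p/(p+t))^{p+t} · ((1−p)/(1−p−t))^{1−p−t} ≤ e^{−2t²}. -/
open Real

/-- `(1-t) * exp (2 t²)` is antitone. -/
private lemma aux_antitone : Antitone (fun t : ℝ => (1 - t) * Real.exp (2 * t ^ 2)) := by
  have hderiv : ∀ x : ℝ, HasDerivAt (fun t : ℝ => (1 - t) * Real.exp (2 * t ^ 2))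
      (-(2 * x - 1) ^ 2 * Real.exp (2 * x ^ 2)) x := by
    intro x
    have h1 : HasDerivAt (fun t : ℝ => 1 - t) (-1) x := by
      simpa using (hasDerivAt_id x).const_sub 1
    have h2 : HasDerivAt (fun t : ℝ => 2 * t ^ 2) (4 * x) x := by
      have := ((hasDerivAt_pow 2 x).const_mul 2)
      simpa using this.congr_deriv (by ring)
    have h3 : HasDerivAt (fun t : ℝ => Real.exp (2 * t ^ 2))
        (Real.exp (2 * x ^ 2) * (4 * x)) x := (Real.hasDerivAt_exp _).comp x h2
    have := h1.mul h3
    refine this.congr_deriv ?_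
    ring
  apply antitone_of_deriv_nonpos
  · intro x
    exact (hderiv x).differentiableAt
  · intro x
    rw [(hderiv x).deriv]
    have : (0:ℝ) ≤ (2 * x - 1) ^ 2 * Real.exp (2 * x ^ 2) := by positivity
    linarith

/-- `1 - t ≤ exp (-2 t²)`. -/
private lemma aux_one_sub (t : ℝ) (ht : 0 ≤ t) : 1 - t ≤ Real.exp (-2 * t ^ 2) := by
  have h := aux_antitone ht
  simp only at h
  have h0 : (1 - (0:ℝ)) * Real.exp (2 * 0 ^ 2) = 1 := by norm_num
  rw [h0] at h
  calc 1 - t = ((1 - t) * Real.exp (2 * t ^ 2)) * Real.exp (-(2 * t ^ 2)) := by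
        rw [mul_assoc, ← Real.exp_add]; simp
    _ ≤ 1 * Real.exp (-(2 * t ^ 2)) :=
        mul_le_mul_of_nonneg_right h (Real.exp_pos _).le
    _ = Real.exp (-2 * t ^ 2) := by rw [one_mul]; ring_nf

/-- Pinsker-type inequality for Bernoulli distributions. -/
private lemma aux_kl (p q : ℝ) (hp : 0 < p) (hpq : p ≤ q) (hq1 : q < 1) :
    q * (Real.log p - Real.log q) + (1 - q) * (Real.log (1 - p) - Real.log (1 - q))
      ≤ -2 * (q - p) ^ 2 := by
  have hp1 : p < 1 := lt_of_le_of_lt hpq hq1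
  -- g x = x (log x - log p) + (1-x)(log(1-x) - log(1-p)) - 2(x-p)^2
  set g : ℝ → ℝ := fun x => x * (Real.log x - Real.log p)
      + (1 - x) * (Real.log (1 - x) - Real.log (1 - p)) - 2 * (x - p) ^ 2 with hg
  set g' : ℝ → ℝ := fun x => (Real.log x - Real.log p)
      - (Real.log (1 - x) - Real.log (1 - p)) - 4 * (x - p) with hg'
  have hdg : ∀ x : ℝ, 0 < x → x < 1 → HasDerivAt g (g' x) x := by
    intro x hx0 hx1
    have hlog : HasDerivAt Real.log x⁻¹ x := Real.hasDerivAt_log (ne_of_gt hx0)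
    have h1x : (0:ℝ) < 1 - x := by linarith
    have hlog2 : HasDerivAt (fun y : ℝ => Real.log (1 - y)) (-(1 - x)⁻¹) x := by
      have hin : HasDerivAt (fun y : ℝ => 1 - y) (-1) x := by
        simpa using (hasDerivAt_id x).const_sub 1
      have := (Real.hasDerivAt_log (ne_of_gt h1x)).comp x hin
      exact this.congr_deriv (by ring)
    have hA : HasDerivAt (fun y : ℝ => y * (Real.log y - Real.log p))
        ((Real.log x - Real.log p) + x * x⁻¹) x :=
      ((hasDerivAt_id x).mul (hlog.sub_const (Real.log p))).congr_deriv (by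
        simp only [id_eq]; ring)
    have hB : HasDerivAt (fun y : ℝ => (1 - y) * (Real.log (1 - y) - Real.log (1 - p)))
        (-(Real.log (1 - x) - Real.log (1 - p)) + (1 - x) * (-(1 - x)⁻¹)) x := by
      have hin : HasDerivAt (fun y : ℝ => 1 - y) (-1) x := by
        simpa using (hasDerivAt_id x).const_sub 1
      exact (hin.mul (hlog2.sub_const (Real.log (1 - p)))).congr_deriv (by ring)
    have hC : HasDerivAt (fun y : ℝ => 2 * (y - p) ^ 2) (4 * (x - p)) x := by
      have hin : HasDerivAt (fun y : ℝ => y - p) 1 x := (hasDerivAt_id x).sub_const p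
      have := ((hin.pow 2).const_mul 2)
      simpa using this.congr_deriv (by ring)
    have := (hA.add hB).sub hC
    rw [hg, hg']
    refine this.congr_deriv ?_
    field_simp
    ring
  have hdg' : ∀ x : ℝ, 0 < x → x < 1 → HasDerivAt g' (x⁻¹ + (1 - x)⁻¹ - 4) x := by
    intro x hx0 hx1
    have h1x : (0:ℝ) < 1 - x := by linarith
    have hlog : HasDerivAt (fun y : ℝ => Real.log y - Real.log p) x⁻¹ x :=
      (Real.hasDerivAt_log (ne_of_gt hx0)).sub_const _
    have hlog2 : HasDerivAt (fun y : ℝ => Real.log (1 - y) - Real.log (1 - p)) (-(1 - x)⁻¹) x := by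
      have hin : HasDerivAt (fun y : ℝ => 1 - y) (-1) x := by
        simpa using (hasDerivAt_id x).const_sub 1
      have := (Real.hasDerivAt_log (ne_of_gt h1x)).comp x hin
      exact (this.sub_const _).congr_deriv (by ring)
    have hlin : HasDerivAt (fun y : ℝ => 4 * (y - p)) 4 x := by
      have := ((hasDerivAt_id x).sub_const p).const_mul 4
      simpa using this.congr_deriv (by ring)
    have := (hlog.sub hlog2).sub hlin
    rw [hg']
    exact this.congr_deriv (by ring)
  -- g' is monotone on [p, q]
  have hsub : Set.Icc p q ⊆ Set.Ioo (0:ℝ) 1 := by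
    intro x hx
    exact ⟨lt_of_lt_of_le hp hx.1, lt_of_le_of_lt hx.2 hq1⟩
  have hg'mono : MonotoneOn g' (Set.Icc p q) := by
    apply monotoneOn_of_deriv_nonneg (convex_Icc p q)
    · intro x hx
      exact (hdg' x (hsub hx).1 (hsub hx).2).continuousAt.continuousWithinAt
    · intro x hx
      have hx' := hsub (interior_subset hx)
      exact (hdg' x hx'.1 hx'.2).differentiableAt.differentiableWithinAt
    · intro x hx
      have hx' := hsub (interior_subset hx)
      rw [(hdg' x hx'.1 hx'.2).deriv]
      have hx0 := hx'.1
      have hx1 : (0:ℝ) < 1 - x := by linarith [hx'.2]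
      have key : x⁻¹ + (1 - x)⁻¹ - 4 = (2 * x - 1) ^ 2 / (x * (1 - x)) := by
        field_simp
        ring
      rw [key]
      positivity
  have hg'p : g' p = 0 := by rw [hg']; ring
  have hg'nonneg : ∀ x ∈ Set.Icc p q, 0 ≤ g' x := by
    intro x hx
    have := hg'mono (Set.left_mem_Icc.2 (le_trans hpq (le_refl q))) hx hx.1
    rw [hg'p] at this
    exact this
  have hgmono : MonotoneOn g (Set.Icc p q) := by
    apply monotoneOn_of_deriv_nonneg (convex_Icc p q)
    · intro x hx
      exact (hdg x (hsub hx).1 (hsub hx).2).continuousAt.continuousWithinAt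
    · intro x hx
      have hx' := hsub (interior_subset hx)
      exact (hdg x hx'.1 hx'.2).differentiableAt.differentiableWithinAt
    · intro x hx
      have hx' := hsub (interior_subset hx)
      rw [(hdg x hx'.1 hx'.2).deriv]
      exact hg'nonneg x (interior_subset hx)
  have hgp : g p = 0 := by rw [hg]; ring
  have hgq : 0 ≤ g q := by
    have := hgmono (Set.left_mem_Icc.2 hpq) (Set.right_mem_Icc.2 hpq) hpq
    rw [hgp] at this
    exact this
  rw [hg] at hgq
  simp only at hgq
  nlinarith [hgq]

theorem hoeffding_implies_chvatal (p t : ℝ) (hp : 0 ≤ p) (ht : 0 ≤ t) (hpt : p + t ≤ 1) :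
    (p / (p + t)) ^ (p + t) * ((1 - p) / (1 - p - t)) ^ (1 - p - t)
      ≤ Real.exp (-2 * t ^ 2) := by
  rcases eq_or_lt_of_le ht with ht0 | ht0
  · -- t = 0 : both factors are at most 1
    subst ht0
    have h1 : (p / (p + 0)) ^ (p + 0) ≤ 1 := by
      apply Real.rpow_le_one (by positivity) _ (by linarith)
      rw [add_zero]
      rcases eq_or_lt_of_le hp with h | h
      · simp [← h]
      · rw [div_self (ne_of_gt h)]
    have h2 : ((1 - p) / (1 - p - 0)) ^ (1 - p - 0) ≤ 1 := by
      apply Real.rpow_le_one (div_nonneg (by linarith) (by linarith)) _ (by linarith)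
      rw [sub_zero]
      rcases eq_or_lt_of_le (show (0:ℝ) ≤ 1 - p by linarith) with h | h
      · simp [← h]
      · rw [div_self (ne_of_gt h)]
    have h3 : (0:ℝ) ≤ (p / (p + 0)) ^ (p + 0) := Real.rpow_nonneg (by positivity) _
    have h4 : (0:ℝ) ≤ ((1 - p) / (1 - p - 0)) ^ (1 - p - 0) :=
      Real.rpow_nonneg (div_nonneg (by linarith) (by linarith)) _
    calc (p / (p + 0)) ^ (p + 0) * ((1 - p) / (1 - p - 0)) ^ (1 - p - 0) ≤ 1 * 1 :=
          mul_le_mul h1 h2 h4 (by linarith)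
      _ = 1 := one_mul 1
      _ ≤ Real.exp (-2 * 0 ^ 2) := by norm_num
  · rcases eq_or_lt_of_le hp with hp0 | hp0
    · -- p = 0 : first factor is 0
      rw [← hp0]
      rw [zero_add, zero_div, Real.zero_rpow (ne_of_gt ht0), zero_mul]
      exact (Real.exp_pos _).le
    · rcases eq_or_lt_of_le hpt with hpt1 | hpt1
      · -- p + t = 1 : boundary case
        have h1 : 1 - p - t = 0 := by linarith
        rw [h1, Real.rpow_zero, mul_one, hpt1, div_one, Real.rpow_one]
        have : p = 1 - t := by linarith
        rw [this]
        exact aux_one_sub t ht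
      · -- main case
        have hq0 : 0 < p + t := by linarith
        have hq1 : p + t < 1 := hpt1
        have hb1 : 0 < p / (p + t) := by positivity
        have hb2 : 0 < (1 - p) / (1 - p - t) := by
          apply div_pos <;> linarith
        rw [Real.rpow_def_of_pos hb1, Real.rpow_def_of_pos hb2, ← Real.exp_add]
        rw [Real.exp_le_exp]
        rw [Real.log_div (ne_of_gt hp0) (ne_of_gt hq0),
          Real.log_div (by linarith : (1:ℝ) - p ≠ 0) (by intro h; linarith [h] : (1:ℝ) - p - t ≠ 0)]
        have key := aux_kl p (p + t) hp0 (by linarith) hq1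
        have e1 : 1 - (p + t) = 1 - p - t := by ring
        rw [e1] at key
        nlinarith [key]
end
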